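/- arXiv:1901.11109 — 5 statements merged into one kernel-verified Lean document; each statement's English description precedes it below -/
import Mathlib

section
/- Let K be a commutative ring and A = (a_{i,j}) an (n+1)×(n+1) matrix over K. Then det of the n×n matrix whose (i,j)-entry is a_{i,j}·a_{n+1,n+1} − a_{i,n+1}·a_{n+1,j} equals a_{n+1,n+1}^{n-1} · det A, for n ≥ 1 (Chio pivotal condensation). -/
open Matrix

lemma chio_aux {K : Type*} [CommRing K] (n : ℕ)
    (A : Matrix (Fin (n + 1)) (Fin (n + 1)) K) :
    A (Fin.last n) (Fin.last n) *
      Matrix.det (Matrix.of fun i j : Fin n =>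
        A i.castSucc j.castSucc * A (Fin.last n) (Fin.last n)
          - A i.castSucc (Fin.last n) * A (Fin.last n) j.castSucc)
      = A (Fin.last n) (Fin.last n) ^ n * A.det := by
  set a := A (Fin.last n) (Fin.last n) with ha
  set E : Matrix (Fin (n+1)) (Fin (n+1)) K := Matrix.of fun i j =>
    if i = Fin.last n then (if j = Fin.last n then 1 else 0)
    else (if j = i then a else 0) + (if j = Fin.last n then -A i (Fin.last n) else 0) with hE
  have hdetE : E.det = a ^ n := by
    rw [Matrix.det_of_upperTriangular]
    · rw [Fin.prod_univ_castSucc]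
      simp [hE, (Fin.castSucc_lt_last _).ne]
    · intro i j hij
      have hij' : j < i := hij
      by_cases hi : i = Fin.last n
      · subst hi
        have hj : j ≠ Fin.last n := hij'.ne
        simp [hE, hj]
      · have h1 : j ≠ i := hij'.ne
        have h2 : j ≠ Fin.last n := (hij'.trans_le (Fin.le_last _)).ne
        simp [hE, hi, h1, h2]
  have hEA : E * A = Matrix.of fun i j =>
      if i = Fin.last n then A (Fin.last n) j
      else a * A i j - A i (Fin.last n) * A (Fin.last n) j := by
    ext i j
    rw [Matrix.mul_apply]
    by_cases hi : i = Fin.last n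
    · simp [hE, hi]
    · simp [hE, hi, add_mul, Finset.sum_add_distrib, ite_mul, sub_eq_add_neg]
  have h1 : (E * A).det = a ^ n * A.det := by rw [Matrix.det_mul, hdetE]
  have h2 : (E * A).det = Matrix.det (Matrix.of fun i j : Fin n =>
        A i.castSucc j.castSucc * a - A i.castSucc (Fin.last n) * A (Fin.last n) j.castSucc) * a := by
    rw [hEA, ← Matrix.det_submatrix_equiv_self finSumFinEquiv]
    have hb : (Matrix.of fun i j =>
        if i = Fin.last n then A (Fin.last n) j
        else a * A i j - A i (Fin.last n) * A (Fin.last n) j).submatrix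
          finSumFinEquiv finSumFinEquiv
        = Matrix.fromBlocks
            (Matrix.of fun i j : Fin n =>
              A i.castSucc j.castSucc * a - A i.castSucc (Fin.last n) * A (Fin.last n) j.castSucc)
            0
            (Matrix.of fun (_ : Fin 1) (j : Fin n) => A (Fin.last n) j.castSucc)
            (Matrix.of fun _ _ => a) := by
      have hcast : ∀ i : Fin n, finSumFinEquiv (Sum.inl i : Fin n ⊕ Fin 1) = i.castSucc := by
        intro i; rfl
      have hlast : ∀ i : Fin 1, finSumFinEquiv (Sum.inr i : Fin n ⊕ Fin 1) = Fin.last n := by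
        intro i; apply Fin.ext; simp
      ext i j
      cases i with
      | inl i => cases j with
        | inl j => simp [hcast, (Fin.castSucc_lt_last _).ne]; ring
        | inr j => simp [hcast, hlast, (Fin.castSucc_lt_last _).ne]; ring
      | inr i => cases j with
        | inl j => simp [hcast, hlast]
        | inr j => simp [hlast]; rfl
    rw [hb, Matrix.det_fromBlocks_zero₁₂, Matrix.det_fin_one]
    rfl
  have h3 : (Matrix.of fun i j : Fin n =>
        A i.castSucc j.castSucc * a - A i.castSucc (Fin.last n) * A (Fin.last n) j.castSucc) =
      (Matrix.of fun i j : Fin n =>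
        A i.castSucc j.castSucc * A (Fin.last n) (Fin.last n)
          - A i.castSucc (Fin.last n) * A (Fin.last n) j.castSucc) := by
    rw [ha]
  rw [mul_comm]
  rw [← h3, ← h2, h1]

/-- Chio pivotal condensation. -/
theorem chio_pivotal_condensation {K : Type*} [CommRing K] (n : ℕ) (hn : 1 ≤ n)
    (A : Matrix (Fin (n + 1)) (Fin (n + 1)) K) :
    Matrix.det (Matrix.of fun i j : Fin n =>
        A i.castSucc j.castSucc * A (Fin.last n) (Fin.last n)
          - A i.castSucc (Fin.last n) * A (Fin.last n) j.castSucc)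
      = A (Fin.last n) (Fin.last n) ^ (n - 1) * A.det := by
  set M := Matrix.mvPolynomialX (Fin (n + 1)) (Fin (n + 1)) ℤ with hM
  have key := chio_aux n M
  have hane : M (Fin.last n) (Fin.last n) ≠ 0 := MvPolynomial.X_ne_zero _
  have hpow : M (Fin.last n) (Fin.last n) ^ n
      = M (Fin.last n) (Fin.last n) * M (Fin.last n) (Fin.last n) ^ (n - 1) := by
    have h := (pow_succ (M (Fin.last n) (Fin.last n)) (n - 1)).symm
    rw [Nat.sub_add_cancel hn] at h
    rw [← h, mul_comm]
  have keyP : Matrix.det (Matrix.of fun i j : Fin n =>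
        M i.castSucc j.castSucc * M (Fin.last n) (Fin.last n)
          - M i.castSucc (Fin.last n) * M (Fin.last n) j.castSucc)
      = M (Fin.last n) (Fin.last n) ^ (n - 1) * M.det :=
    mul_left_cancel₀ hane (key.trans (by rw [hpow, mul_assoc]))
  -- now push through the evaluation ring hom
  set φ : MvPolynomial (Fin (n + 1) × Fin (n + 1)) ℤ →+* K :=
    MvPolynomial.eval₂Hom (Int.castRingHom K) (fun p => A p.1 p.2) with hφ
  have hMA : M.map φ = A := Matrix.mvPolynomialX_map_eval₂ _ A
  have := congrArg φ keyP
  rw [_root_.map_mul, map_pow, RingHom.map_det, RingHom.map_det,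
    RingHom.mapMatrix_apply, RingHom.mapMatrix_apply] at this
  have hB : (Matrix.of fun i j : Fin n =>
        M i.castSucc j.castSucc * M (Fin.last n) (Fin.last n)
          - M i.castSucc (Fin.last n) * M (Fin.last n) j.castSucc).map φ
      = Matrix.of fun i j : Fin n =>
        A i.castSucc j.castSucc * A (Fin.last n) (Fin.last n)
          - A i.castSucc (Fin.last n) * A (Fin.last n) j.castSucc := by
    ext i j
    simp [Matrix.map_apply, hM, hφ]
  have hφa : φ (M (Fin.last n) (Fin.last n)) = A (Fin.last n) (Fin.last n) := by
    simp [hM, hφ]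
  rw [hB, hMA, hφa] at this
  exact this
end

section
/- Let K be a commutative ring, and let A be an n×p matrix and B a p×m matrix over K. Let k be a nonnegative integer, P a k-element subset of {1,...,n}, and Q a k-element subset of {1,...,m}. Then det(sub_P^Q(AB)) = Σ_R det(sub_P^R A) · det(sub_R^Q B), where the sum ranges over all k-element subsets R of {1,...,p}. -/
open Matrix Finset Function Equiv

namespace CBaux

variable {K : Type*} [CommRing K] {k p : ℕ}

local notation "ε " σ:arg => ((Equiv.Perm.sign σ : ℤ) : K)

private lemma aux0 (M : Matrix (Fin k) (Fin p) K) (N : Matrix (Fin p) (Fin k) K)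
    {f : Fin k → Fin p} (H : ¬Injective f) :
    (∑ σ : Perm (Fin k), ε σ * ∏ x, M (σ x) (f x) * N (f x) x) = 0 := by
  obtain ⟨i, j, hfij, hij⟩ : ∃ i j, f i = f j ∧ i ≠ j := by
    rw [Injective] at H; push_neg at H; exact H
  exact Finset.sum_involution (fun σ _ => σ * Equiv.swap i j)
    (fun σ _ => by
      have : (∏ x, M (σ x) (f x)) = ∏ x, M ((σ * Equiv.swap i j) x) (f x) :=
        Fintype.prod_equiv (swap i j) _ _ (by simp [Equiv.apply_swap_eq_self hfij])
      simp [this, Equiv.Perm.sign_swap hij, prod_mul_distrib])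
    (fun σ _ _ => (not_congr Equiv.mul_swap_eq_iff).mpr hij) (fun _ _ => Finset.mem_univ _)
    fun σ _ => Equiv.mul_swap_involutive i j σ

private lemma step1 (M : Matrix (Fin k) (Fin p) K) (N : Matrix (Fin p) (Fin k) K) :
    det (M * N) = ∑ f : Fin k → Fin p, ∑ σ : Perm (Fin k),
      ε σ * ∏ i, M (σ i) (f i) * N (f i) i := by
  simp only [det_apply', mul_apply, prod_univ_sum, mul_sum, Fintype.piFinset_univ]
  rw [Finset.sum_comm]

private lemma himage (R : Finset (Fin p)) (hR : R.card = k) {g : Fin k → Fin k}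
    (hg : Injective g) :
    Finset.image (fun a => (R.orderIsoOfFin hR (g a) : Fin p)) Finset.univ = R := by
  ext x
  simp only [Finset.mem_image, Finset.mem_univ, true_and]
  constructor
  · rintro ⟨a, rfl⟩; exact (R.orderIsoOfFin hR (g a)).2
  · intro hx
    obtain ⟨a, ha⟩ := (Finite.injective_iff_bijective.mp hg).surjective
      ((R.orderIsoOfFin hR).symm ⟨x, hx⟩)
    exact ⟨a, by rw [ha, OrderIso.apply_symm_apply]⟩

/-- The gluing map from (subset, injection) pairs to injections. -/
private def jmap {k p : ℕ} :
    {s : Finset (Fin p) // s.card = k} × {g : Fin k → Fin k // Injective g} →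
      {f : Fin k → Fin p // Injective f} :=
  fun x => ⟨fun a => (x.1.1.orderIsoOfFin x.1.2 (x.2.1 a) : Fin p),
    fun a b hab => x.2.2 ((x.1.1.orderIsoOfFin x.1.2).injective (Subtype.ext hab))⟩

private lemma jmap_bij : Bijective (jmap (k := k) (p := p)) := by
  constructor
  · rintro ⟨⟨R1, h1⟩, ⟨g1, hg1⟩⟩ ⟨⟨R2, h2⟩, ⟨g2, hg2⟩⟩ h
    have hfun : (fun a => (R1.orderIsoOfFin h1 (g1 a) : Fin p))
        = fun a => (R2.orderIsoOfFin h2 (g2 a) : Fin p) := congrArg Subtype.val h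
    have hR : R1 = R2 := by
      rw [← himage R1 h1 hg1, ← himage R2 h2 hg2, hfun]
    subst hR
    have hg : g1 = g2 := by
      funext a
      exact (R1.orderIsoOfFin h1).injective (Subtype.ext (congrFun hfun a))
    subst hg
    rfl
  · rintro ⟨f, hf⟩
    have hcard : (Finset.image f Finset.univ).card = k := by
      rw [Finset.card_image_of_injective _ hf, Finset.card_univ, Fintype.card_fin]
    refine ⟨⟨⟨Finset.image f Finset.univ, hcard⟩,
      ⟨fun a => ((Finset.image f Finset.univ).orderIsoOfFin hcard).symm
        ⟨f a, Finset.mem_image_of_mem f (Finset.mem_univ a)⟩, ?_⟩⟩, ?_⟩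
    · intro a b hab
      exact hf (congrArg Subtype.val
        (((Finset.image f Finset.univ).orderIsoOfFin hcard).symm.injective hab))
    · apply Subtype.ext
      funext a
      simp [jmap]

/-- Rectangular Cauchy–Binet. -/
lemma cauchy_binet_rect (A : Matrix (Fin k) (Fin p) K) (B : Matrix (Fin p) (Fin k) K) :
    det (A * B) = ∑ R : {s : Finset (Fin p) // s.card = k},
      (A.submatrix id (fun a => (R.1.orderIsoOfFin R.2 a : Fin p))).det *
      (B.submatrix (fun a => (R.1.orderIsoOfFin R.2 a : Fin p)) id).det := by
  have key2 : ∀ (R : {s : Finset (Fin p) // s.card = k}),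
      (A.submatrix id (fun a => (R.1.orderIsoOfFin R.2 a : Fin p))).det *
      (B.submatrix (fun a => (R.1.orderIsoOfFin R.2 a : Fin p)) id).det
      = ∑ g : {g : Fin k → Fin k // Injective g}, ∑ σ : Perm (Fin k),
          ε σ * ∏ i, A (σ i) (R.1.orderIsoOfFin R.2 (g.1 i)) *
            B (R.1.orderIsoOfFin R.2 (g.1 i)) i := by
    intro R
    rw [← det_mul, step1, ← Finset.sum_filter_add_sum_filter_not Finset.univ
      (fun g : Fin k → Fin k => Injective g)]
    have hz : (∑ g ∈ Finset.univ.filter (fun g : Fin k → Fin k => ¬ Injective g),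
        ∑ σ : Perm (Fin k), ε σ * ∏ i,
          (A.submatrix id (fun a => (R.1.orderIsoOfFin R.2 a : Fin p))) (σ i) (g i) *
          (B.submatrix (fun a => (R.1.orderIsoOfFin R.2 a : Fin p)) id) (g i) i) = 0 :=
      Finset.sum_eq_zero fun g hg => aux0 _ _ (Finset.mem_filter.mp hg).2
    rw [hz, add_zero, Finset.sum_subtype
      (Finset.univ.filter fun g : Fin k → Fin k => Injective g) (p := fun g : Fin k → Fin k => Injective g) (fun g => by simp)
      (f := fun g : Fin k → Fin k => ∑ σ : Perm (Fin k), ε σ * ∏ i,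
          (A.submatrix id (fun a => (R.1.orderIsoOfFin R.2 a : Fin p))) (σ i) (g i) *
          (B.submatrix (fun a => (R.1.orderIsoOfFin R.2 a : Fin p)) id) (g i) i)]
    rfl
  rw [step1 A B, ← Finset.sum_filter_add_sum_filter_not Finset.univ
    (fun f : Fin k → Fin p => Injective f)]
  have hz : (∑ f ∈ Finset.univ.filter (fun f : Fin k → Fin p => ¬ Injective f),
      ∑ σ : Perm (Fin k), ε σ * ∏ i, A (σ i) (f i) * B (f i) i) = 0 :=
    Finset.sum_eq_zero fun f hf => aux0 A B (Finset.mem_filter.mp hf).2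
  rw [hz, add_zero, Finset.sum_subtype
    (Finset.univ.filter fun f : Fin k → Fin p => Injective f) (p := fun f : Fin k → Fin p => Injective f) (fun f => by simp)
    (f := fun f : Fin k → Fin p => ∑ σ : Perm (Fin k),
      ε σ * ∏ i, A (σ i) (f i) * B (f i) i)]
  simp only [key2]
  have hb := Fintype.sum_bijective (jmap (k := k) (p := p)) jmap_bij
    (fun x => ∑ σ : Perm (Fin k), ε σ * ∏ i,
      A (σ i) (x.1.1.orderIsoOfFin x.1.2 (x.2.1 i)) * B (x.1.1.orderIsoOfFin x.1.2 (x.2.1 i)) i)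
    (fun f => ∑ σ : Perm (Fin k), ε σ * ∏ i, A (σ i) (f.1 i) * B (f.1 i) i)
    (fun x => rfl)
  rw [← hb]
  exact Fintype.sum_prod_type (f := fun x : {s : Finset (Fin p) // s.card = k} ×
    {g : Fin k → Fin k // Injective g} => ∑ σ : Perm (Fin k), ε σ * ∏ i,
      A (σ i) (x.1.1.orderIsoOfFin x.1.2 (x.2.1 i)) * B (x.1.1.orderIsoOfFin x.1.2 (x.2.1 i)) i)

end CBaux

open Matrix

/-- The square submatrix of a `u × v` matrix `M` retaining only the rows in `I`
and the columns in `J` (in increasing order), where `|I| = |J| = k`. -/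
noncomputable def subMatrix {K : Type*} {u v k : ℕ} (M : Matrix (Fin u) (Fin v) K)
    (I : Finset (Fin u)) (hI : I.card = k) (J : Finset (Fin v)) (hJ : J.card = k) :
    Matrix (Fin k) (Fin k) K :=
  Matrix.of fun a b => M ((I.orderIsoOfFin hI) a) ((J.orderIsoOfFin hJ) b)

/-- Cauchy–Binet formula for minors. -/
theorem cauchy_binet_minors {K : Type*} [CommRing K] (n m p k : ℕ)
    (A : Matrix (Fin n) (Fin p) K) (B : Matrix (Fin p) (Fin m) K)
    (P : Finset (Fin n)) (hP : P.card = k) (Q : Finset (Fin m)) (hQ : Q.card = k) :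
    (subMatrix (A * B) P hP Q hQ).det
      = ∑ R : {s : Finset (Fin p) // s.card = k},
          (subMatrix A P hP R.1 R.2).det * (subMatrix B R.1 R.2 Q hQ).det := by
  have h1 : subMatrix (A * B) P hP Q hQ
      = (A.submatrix (fun a : Fin k => ((P.orderIsoOfFin hP) a : Fin n)) id)
        * (B.submatrix id (fun b : Fin k => ((Q.orderIsoOfFin hQ) b : Fin m))) := by
    ext a b
    simp [subMatrix, Matrix.mul_apply]
  rw [h1, CBaux.cauchy_binet_rect]
  rfl
end

section
/- Let n be a positive integer, and let G = ℤ[a_{i,j} : (i,j) ∈ {1,...,n}²] be the polynomial ring over ℤ in n² indeterminates. Let A be the n×n matrix over G whose (i,j)-entry is the indeterminate a_{i,j}. Then det A is an irreducible element of G. -/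
open Matrix MvPolynomial

namespace DetIrredAux

noncomputable section

variable (n : ℕ)

/-- The generic matrix. -/
def genMat : Matrix (Fin n) (Fin n) (MvPolynomial (Fin n × Fin n) ℤ) :=
  Matrix.of fun i j => X (i, j)

/-- Its determinant. -/
def detP : MvPolynomial (Fin n × Fin n) ℤ := (genMat n).det

/-- The exponent finsupp of the monomial `∏ i, X (σ i, i)`. -/
def permMon (σ : Equiv.Perm (Fin n)) : (Fin n × Fin n) →₀ ℕ :=
  ∑ i, Finsupp.single (σ i, i) 1

lemma permMon_apply (σ : Equiv.Perm (Fin n)) (k j : Fin n) :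
    permMon n σ (k, j) = if σ j = k then 1 else 0 := by
  classical
  rw [permMon, Finsupp.finset_sum_apply]
  rw [Finset.sum_eq_single j]
  · simp [Finsupp.single_apply, Prod.ext_iff]
  · intro i _ hij
    simp [Finsupp.single_apply, Prod.ext_iff, hij]
  · simp

lemma permMon_inj : Function.Injective (permMon n) := by
  intro σ τ h
  apply Equiv.ext
  intro i
  by_contra hne
  have h2 : permMon n σ (τ i, i) = permMon n τ (τ i, i) := DFunLike.congr_fun h (τ i, i)
  rw [permMon_apply, permMon_apply, if_neg hne, if_pos rfl] at h2
  exact one_ne_zero h2.symm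

lemma prod_monomial {ι : Type*} (s : Finset ι) (d : ι → ((Fin n × Fin n) →₀ ℕ)) :
    (∏ i ∈ s, (monomial (d i) (1 : ℤ) : MvPolynomial (Fin n × Fin n) ℤ)) =
      monomial (∑ i ∈ s, d i) 1 := by
  classical
  induction s using Finset.induction_on with
  | empty => simp
  | insert _ _ h ih =>
    rw [Finset.prod_insert h, Finset.sum_insert h, ih, monomial_mul, one_mul]

lemma prod_X_eq (σ : Equiv.Perm (Fin n)) :
    (∏ i, (X (σ i, i) : MvPolynomial (Fin n × Fin n) ℤ)) = monomial (permMon n σ) 1 := by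
  rw [permMon, ← prod_monomial]
  exact Finset.prod_congr rfl fun i _ => rfl

lemma coeff_detP (τ : Equiv.Perm (Fin n)) :
    coeff (permMon n τ) (detP n) = ((Equiv.Perm.sign τ : ℤˣ) : ℤ) := by
  classical
  rw [detP, Matrix.det_apply]
  simp only [genMat, of_apply, prod_X_eq, coeff_sum, coeff_smul]
  rw [Finset.sum_eq_single τ]
  · simp [coeff_monomial, Units.smul_def]
  · intro σ _ hστ
    rw [coeff_monomial, if_neg (fun h => hστ (permMon_inj n h)), smul_zero]
  · simp

lemma vars_detP (q : Fin n × Fin n) : q ∈ (detP n).vars := by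
  obtain ⟨k, j⟩ := q
  refine (mem_vars _).2 ⟨permMon n (Equiv.swap j k), ?_, ?_⟩
  · rw [mem_support_iff, coeff_detP]
    simp
  · rw [Finsupp.mem_support_iff, permMon_apply, if_pos (Equiv.swap_apply_left j k)]
    exact one_ne_zero

/-- Evaluation at the identity matrix. -/
def epsHom : MvPolynomial (Fin n × Fin n) ℤ →+* ℤ :=
  eval₂Hom (RingHom.id ℤ) fun p => if p.1 = p.2 then 1 else 0

lemma epsHom_detP : epsHom n (detP n) = 1 := by
  rw [detP, RingHom.map_det, RingHom.mapMatrix_apply]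
  have : (genMat n).map (epsHom n) = (1 : Matrix (Fin n) (Fin n) ℤ) := by
    ext i j
    simp [genMat, epsHom, Matrix.one_apply]
  rw [this, Matrix.det_one]

lemma detP_ne_zero : detP n ≠ 0 := by
  intro h
  have := epsHom_detP n
  rw [h, map_zero] at this
  exact zero_ne_one this

/-- Scaling row `i` by an indeterminate `t`. -/
def rowHom (i : Fin n) :
    MvPolynomial (Fin n × Fin n) ℤ →+* Polynomial (MvPolynomial (Fin n × Fin n) ℤ) :=
  eval₂Hom (Polynomial.C.comp MvPolynomial.C) fun p =>
    if p.1 = i then Polynomial.C (X p) * Polynomial.X else Polynomial.C (X p)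

/-- Scaling column `j` by an indeterminate `t`. -/
def colHom (j : Fin n) :
    MvPolynomial (Fin n × Fin n) ℤ →+* Polynomial (MvPolynomial (Fin n × Fin n) ℤ) :=
  eval₂Hom (Polynomial.C.comp MvPolynomial.C) fun p =>
    if p.2 = j then Polynomial.C (X p) * Polynomial.X else Polynomial.C (X p)

lemma rowHom_detP (i : Fin n) :
    rowHom n i (detP n) = Polynomial.C (detP n) * Polynomial.X := by
  classical
  rw [detP, RingHom.map_det, RingHom.mapMatrix_apply]
  have hmap : (genMat n).map (rowHom n i) =
      Matrix.updateRow
        ((genMat n).map (Polynomial.C :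
            MvPolynomial (Fin n × Fin n) ℤ →+* Polynomial (MvPolynomial (Fin n × Fin n) ℤ))) i
        ((Polynomial.X : Polynomial (MvPolynomial (Fin n × Fin n) ℤ)) •
          ((genMat n).map (Polynomial.C :
            MvPolynomial (Fin n × Fin n) ℤ →+* Polynomial (MvPolynomial (Fin n × Fin n) ℤ))) i) := by
    ext k j
    by_cases hk : k = i
    · subst hk
      simp only [Matrix.map_apply, Matrix.updateRow_self, Pi.smul_apply, smul_eq_mul,
        genMat, of_apply, rowHom, eval₂Hom_X']
      rw [if_true, mul_comm]
    · simp only [Matrix.map_apply, Matrix.updateRow_ne hk, genMat, of_apply, rowHom, eval₂Hom_X']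
      simp [hk]
  rw [hmap, Matrix.det_updateRow_smul, Matrix.updateRow_eq_self,
    ← RingHom.mapMatrix_apply, ← RingHom.map_det]
  exact mul_comm _ _

lemma colHom_detP (j : Fin n) :
    colHom n j (detP n) = Polynomial.C (detP n) * Polynomial.X := by
  classical
  rw [detP, RingHom.map_det, RingHom.mapMatrix_apply]
  have hmap : (genMat n).map (colHom n j) =
      Matrix.updateCol
        ((genMat n).map (Polynomial.C :
            MvPolynomial (Fin n × Fin n) ℤ →+* Polynomial (MvPolynomial (Fin n × Fin n) ℤ))) j
        ((Polynomial.X : Polynomial (MvPolynomial (Fin n × Fin n) ℤ)) •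
          fun k => ((genMat n).map (Polynomial.C :
            MvPolynomial (Fin n × Fin n) ℤ →+* Polynomial (MvPolynomial (Fin n × Fin n) ℤ))) k j) := by
    ext k l
    by_cases hl : l = j
    · subst hl
      simp only [Matrix.map_apply, Matrix.updateCol_self, Pi.smul_apply, smul_eq_mul,
        genMat, of_apply, colHom, eval₂Hom_X']
      rw [if_true, mul_comm]
    · simp only [Matrix.map_apply, Matrix.updateCol_ne hl, genMat, of_apply, colHom,
        eval₂Hom_X']
      simp [hl]
  rw [hmap, Matrix.det_updateCol_smul, Matrix.updateCol_eq_self,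
    ← RingHom.mapMatrix_apply, ← RingHom.map_det]
  exact mul_comm _ _

lemma rowHom_natDegree_zero {i : Fin n} {f : MvPolynomial (Fin n × Fin n) ℤ}
    (h : (rowHom n i f).natDegree = 0) : ∀ j, (i, j) ∉ f.vars := by
  classical
  set u : Fin n × Fin n → MvPolynomial (Fin n × Fin n) ℤ :=
    fun p => if p.1 = i then 0 else X p with hu
  have h1 : (Polynomial.evalRingHom (1 : MvPolynomial (Fin n × Fin n) ℤ)).comp (rowHom n i) =
      RingHom.id _ := by
    apply MvPolynomial.ringHom_ext
    · intro r; simp [rowHom]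
    · intro p
      simp only [RingHom.comp_apply, rowHom, eval₂Hom_X', RingHom.id_apply]
      split <;> simp
  have h0 : (Polynomial.evalRingHom (0 : MvPolynomial (Fin n × Fin n) ℤ)).comp (rowHom n i) =
      (bind₁ u : MvPolynomial (Fin n × Fin n) ℤ →ₐ[ℤ] _).toRingHom := by
    apply MvPolynomial.ringHom_ext
    · intro r; simp [rowHom]
    · intro p
      simp only [RingHom.comp_apply, rowHom, eval₂Hom_X', AlgHom.toRingHom_eq_coe,
        RingHom.coe_coe, bind₁_X_right, hu]
      split <;> simp
  have hfC : rowHom n i f = Polynomial.C ((rowHom n i f).coeff 0) :=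
    Polynomial.eq_C_of_natDegree_eq_zero h
  have hf1 : f = (rowHom n i f).coeff 0 := by
    have := congrArg (fun φ => φ f) h1
    simp only [RingHom.comp_apply, RingHom.id_apply] at this
    conv_lhs => rw [← this, hfC]
    simp
  have hf0 : bind₁ u f = (rowHom n i f).coeff 0 := by
    have := congrArg (fun φ => φ f) h0
    simp only [RingHom.comp_apply, AlgHom.toRingHom_eq_coe, RingHom.coe_coe] at this
    rw [← this, hfC]
    simp
  have hfix : f = bind₁ u f := by rw [hf0, ← hf1]
  intro j hmem
  rw [hfix] at hmem
  obtain ⟨q, hq, hq2⟩ := mem_vars_bind₁ u f hmem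
  by_cases hqi : q.1 = i
  · rw [hu] at hq2; simp [hqi] at hq2
  · rw [hu] at hq2
    simp only [if_neg hqi, vars_X, Finset.mem_singleton] at hq2
    exact hqi (congrArg Prod.fst hq2.symm)

lemma colHom_natDegree_zero {j : Fin n} {f : MvPolynomial (Fin n × Fin n) ℤ}
    (h : (colHom n j f).natDegree = 0) : ∀ i, (i, j) ∉ f.vars := by
  classical
  set u : Fin n × Fin n → MvPolynomial (Fin n × Fin n) ℤ :=
    fun p => if p.2 = j then 0 else X p with hu
  have h1 : (Polynomial.evalRingHom (1 : MvPolynomial (Fin n × Fin n) ℤ)).comp (colHom n j) =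
      RingHom.id _ := by
    apply MvPolynomial.ringHom_ext
    · intro r; simp [colHom]
    · intro p
      simp only [RingHom.comp_apply, colHom, eval₂Hom_X', RingHom.id_apply]
      split <;> simp
  have h0 : (Polynomial.evalRingHom (0 : MvPolynomial (Fin n × Fin n) ℤ)).comp (colHom n j) =
      (bind₁ u : MvPolynomial (Fin n × Fin n) ℤ →ₐ[ℤ] _).toRingHom := by
    apply MvPolynomial.ringHom_ext
    · intro r; simp [colHom]
    · intro p
      simp only [RingHom.comp_apply, colHom, eval₂Hom_X', AlgHom.toRingHom_eq_coe,
        RingHom.coe_coe, bind₁_X_right, hu]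
      split <;> simp
  have hfC : colHom n j f = Polynomial.C ((colHom n j f).coeff 0) :=
    Polynomial.eq_C_of_natDegree_eq_zero h
  have hf1 : f = (colHom n j f).coeff 0 := by
    have := congrArg (fun φ => φ f) h1
    simp only [RingHom.comp_apply, RingHom.id_apply] at this
    conv_lhs => rw [← this, hfC]
    simp
  have hf0 : bind₁ u f = (colHom n j f).coeff 0 := by
    have := congrArg (fun φ => φ f) h0
    simp only [RingHom.comp_apply, AlgHom.toRingHom_eq_coe, RingHom.coe_coe] at this
    rw [← this, hfC]
    simp
  have hfix : f = bind₁ u f := by rw [hf0, ← hf1]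
  intro i hmem
  rw [hfix] at hmem
  obtain ⟨q, hq, hq2⟩ := mem_vars_bind₁ u f hmem
  by_cases hqj : q.2 = j
  · rw [hu] at hq2; simp [hqj] at hq2
  · rw [hu] at hq2
    simp only [if_neg hqj, vars_X, Finset.mem_singleton] at hq2
    exact hqj (congrArg Prod.snd hq2.symm)

/-- A nonunit with no variables dividing `detP` is impossible; more precisely a divisor with
empty variable set is a unit. -/
lemma isUnit_of_vars_empty {f : MvPolynomial (Fin n × Fin n) ℤ}
    (hv : f.vars = ∅) (hdvd : f ∣ detP n) : IsUnit f := by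
  have hmem : f ∈ MvPolynomial.supported ℤ (∅ : Set (Fin n × Fin n)) := by
    rw [MvPolynomial.mem_supported, hv]
    simp
  rw [MvPolynomial.supported_empty, Algebra.mem_bot] at hmem
  obtain ⟨r, hr⟩ := hmem
  rw [MvPolynomial.algebraMap_eq] at hr
  obtain ⟨g, hg⟩ := hdvd
  have hone : epsHom n f * epsHom n g = 1 := by
    rw [← _root_.map_mul, ← hg, epsHom_detP]
  have hrunit : IsUnit (epsHom n f) := IsUnit.of_mul_eq_one _ hone
  rw [← hr] at hrunit ⊢
  have hc : epsHom n (MvPolynomial.C r) = r := by simp [epsHom]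
  rw [hc] at hrunit
  exact hrunit.map MvPolynomial.C

end

end DetIrredAux

open DetIrredAux in
/-- The determinant of the generic `n × n` matrix over `ℤ` is irreducible. -/
theorem det_generic_matrix_irreducible_int (n : ℕ) (hn : 1 ≤ n) :
    Irreducible (Matrix.det (Matrix.of fun i j : Fin n =>
      (MvPolynomial.X (i, j) : MvPolynomial (Fin n × Fin n) ℤ))) := by
  classical
  show Irreducible (detP n)
  have hd0 := detP_ne_zero n
  constructor
  · -- not a unit
    intro hu
    have h1 := Polynomial.natDegree_eq_zero_of_isUnit (hu.map (rowHom n ⟨0, hn⟩))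
    rw [rowHom_detP, Polynomial.natDegree_C_mul_X _ hd0] at h1
    exact one_ne_zero h1
  · rintro f g hfg
    by_contra hcon
    push_neg at hcon
    obtain ⟨hf, hg⟩ := hcon
    have hfd : f ∣ detP n := ⟨g, hfg⟩
    have hgd : g ∣ detP n := ⟨f, by rw [hfg, mul_comm]⟩
    -- both factors have a variable
    have hvf : f.vars ≠ ∅ := fun h => hf (isUnit_of_vars_empty n h hfd)
    have hvg : g.vars ≠ ∅ := fun h => hg (isUnit_of_vars_empty n h hgd)
    obtain ⟨⟨i, j⟩, hij⟩ := Finset.nonempty_iff_ne_empty.2 hvf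
    obtain ⟨⟨k, l⟩, hkl⟩ := Finset.nonempty_iff_ne_empty.2 hvg
    -- degree bookkeeping for rows
    have hrow : ∀ i' : Fin n,
        (rowHom n i' f).natDegree + (rowHom n i' g).natDegree = 1 := by
      intro i'
      have hmul : rowHom n i' f * rowHom n i' g = Polynomial.C (detP n) * Polynomial.X := by
        rw [← _root_.map_mul, ← hfg, rowHom_detP]
      have hne : Polynomial.C (detP n) * Polynomial.X ≠ 0 := by
        intro h
        have := Polynomial.natDegree_C_mul_X (detP n) hd0
        rw [h] at this
        simp at this
      have hf0 : rowHom n i' f ≠ 0 := fun h => hne (by rw [← hmul, h, zero_mul])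
      have hg0 : rowHom n i' g ≠ 0 := fun h => hne (by rw [← hmul, h, mul_zero])
      rw [← Polynomial.natDegree_mul hf0 hg0, hmul, Polynomial.natDegree_C_mul_X _ hd0]
    have hcol : ∀ j' : Fin n,
        (colHom n j' f).natDegree + (colHom n j' g).natDegree = 1 := by
      intro j'
      have hmul : colHom n j' f * colHom n j' g = Polynomial.C (detP n) * Polynomial.X := by
        rw [← _root_.map_mul, ← hfg, colHom_detP]
      have hne : Polynomial.C (detP n) * Polynomial.X ≠ 0 := by
        intro h
        have := Polynomial.natDegree_C_mul_X (detP n) hd0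
        rw [h] at this
        simp at this
      have hf0 : colHom n j' f ≠ 0 := fun h => hne (by rw [← hmul, h, zero_mul])
      have hg0 : colHom n j' g ≠ 0 := fun h => hne (by rw [← hmul, h, mul_zero])
      rw [← Polynomial.natDegree_mul hf0 hg0, hmul, Polynomial.natDegree_C_mul_X _ hd0]
    -- g is free of column j
    have hgcolj : ∀ i', (i', j) ∉ g.vars := by
      apply colHom_natDegree_zero
      have h1 : (colHom n j f).natDegree ≠ 0 := by
        intro h
        exact colHom_natDegree_zero n h i hij
      have h2 := hcol j
      omega
    -- f is free of row k
    have hfrowk : ∀ l', (k, l') ∉ f.vars := by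
      apply rowHom_natDegree_zero
      have h1 : (rowHom n k g).natDegree ≠ 0 := by
        intro h
        exact rowHom_natDegree_zero n h l hkl
      have h2 := hrow k
      omega
    -- the variable (k, j) must be somewhere
    have hkj := vars_detP n (k, j)
    rw [hfg] at hkj
    rcases Finset.mem_union.1 (vars_mul f g hkj) with h | h
    · exact hfrowk j h
    · exact hgcolj k h
end

section
/- Let n be a positive integer and F a field. Let A be the generic n×n matrix over the polynomial ring F[a_{i,j} : (i,j) ∈ {1,...,n}²], whose (i,j)-entry is the indeterminate a_{i,j}. Then det A is an irreducible polynomial in F[a_{i,j}]. -/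
open Matrix MvPolynomial

namespace DetGenericIrred

open Finsupp Equiv

variable {F : Type*} [Field F] {n : ℕ}

/-- The exponent finsupp of the monomial corresponding to a permutation. -/
noncomputable def pmon (n : ℕ) (σ : Equiv.Perm (Fin n)) : (Fin n × Fin n) →₀ ℕ :=
  ∑ k, Finsupp.single (σ k, k) 1

lemma pmon_apply_ne_zero {σ : Equiv.Perm (Fin n)} {x : Fin n × Fin n}
    (hx : pmon n σ x ≠ 0) : x = (σ x.2, x.2) := by
  rw [pmon, Finset.sum_apply'] at hx
  obtain ⟨k, -, hk⟩ := Finset.exists_ne_zero_of_sum_ne_zero hx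
  rw [Finsupp.single_apply] at hk
  have : (σ k, k) = x := by by_contra h; simp [h] at hk
  subst this; rfl

lemma pmon_apply_self (σ : Equiv.Perm (Fin n)) (k : Fin n) : pmon n σ (σ k, k) = 1 := by
  rw [pmon, Finset.sum_apply']
  rw [Finset.sum_eq_single k]
  · simp
  · intro j _ hj
    rw [Finsupp.single_apply, if_neg]
    intro h
    exact hj (by simpa using congrArg Prod.snd h)
  · simp

lemma pmon_injective : Function.Injective (pmon n) := by
  intro σ τ h
  ext k
  have h1 : pmon n τ (σ k, k) = 1 := h ▸ pmon_apply_self σ k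
  have h2 := pmon_apply_ne_zero (x := (σ k, k)) (σ := τ) (by rw [h1]; norm_num)
  exact congrArg Fin.val (congrArg Prod.fst h2)

lemma weight_pmon_row (σ : Equiv.Perm (Fin n)) (i : Fin n) :
    Finsupp.weight (fun v : Fin n × Fin n => if v.1 = i then 1 else 0) (pmon n σ) = 1 := by
  rw [pmon, map_sum]
  have : ∀ k : Fin n, Finsupp.weight (fun v : Fin n × Fin n => if v.1 = i then 1 else 0)
      (Finsupp.single (σ k, k) 1) = if k = σ.symm i then 1 else 0 := by
    intro k
    rw [Finsupp.weight_apply, Finsupp.sum_single_index (by simp)]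
    simp [Equiv.apply_eq_iff_eq_symm_apply]
  simp only [this]
  simp

lemma weight_pmon_col (σ : Equiv.Perm (Fin n)) (j : Fin n) :
    Finsupp.weight (fun v : Fin n × Fin n => if v.2 = j then 1 else 0) (pmon n σ) = 1 := by
  rw [pmon, map_sum]
  have : ∀ k : Fin n, Finsupp.weight (fun v : Fin n × Fin n => if v.2 = j then 1 else 0)
      (Finsupp.single (σ k, k) 1) = if k = j then 1 else 0 := by
    intro k
    rw [Finsupp.weight_apply, Finsupp.sum_single_index (by simp)]
    simp
  simp only [this]
  simp

/-- The generic determinant as a sum of signed monomials. -/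
lemma det_eq_sum (F : Type*) [Field F] (n : ℕ) :
    (Matrix.det (Matrix.of fun i j : Fin n =>
      (MvPolynomial.X (i, j) : MvPolynomial (Fin n × Fin n) F)))
    = ∑ σ : Equiv.Perm (Fin n),
        monomial (pmon n σ) (((Equiv.Perm.sign σ : ℤ) : F)) := by
  rw [Matrix.det_apply]
  refine Finset.sum_congr rfl fun σ _ => ?_
  have hprod : (∏ k, (MvPolynomial.X (σ k, k) : MvPolynomial (Fin n × Fin n) F))
      = monomial (pmon n σ) 1 := by
    rw [pmon, monomial_sum_one]
    refine Finset.prod_congr rfl fun k _ => ?_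
    rw [← X_pow_eq_monomial, pow_one]
  simp only [Matrix.of_apply, hprod, smul_monomial]
  congr 1
  rcases Int.units_eq_one_or (Equiv.Perm.sign σ) with h | h <;> simp [h]

lemma coeff_det (τ : Equiv.Perm (Fin n)) :
    coeff (pmon n τ) (Matrix.det (Matrix.of fun i j : Fin n =>
      (MvPolynomial.X (i, j) : MvPolynomial (Fin n × Fin n) F)))
    = ((Equiv.Perm.sign τ : ℤ) : F) := by
  rw [det_eq_sum, coeff_sum]
  rw [Finset.sum_eq_single τ]
  · simp [coeff_monomial]
  · intro σ _ hστ
    rw [coeff_monomial, if_neg (fun h => hστ (pmon_injective h))]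
  · simp

lemma coeff_det_ne_zero (τ : Equiv.Perm (Fin n)) :
    coeff (pmon n τ) (Matrix.det (Matrix.of fun i j : Fin n =>
      (MvPolynomial.X (i, j) : MvPolynomial (Fin n × Fin n) F))) ≠ 0 := by
  rw [coeff_det]
  rcases Int.units_eq_one_or (Equiv.Perm.sign τ) with h | h <;> simp [h]

lemma det_row_homog (i : Fin n) :
    IsWeightedHomogeneous (fun v : Fin n × Fin n => if v.1 = i then 1 else 0)
      (Matrix.det (Matrix.of fun i j : Fin n =>
        (MvPolynomial.X (i, j) : MvPolynomial (Fin n × Fin n) F))) 1 := by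
  rw [det_eq_sum]
  apply IsWeightedHomogeneous.sum
  intro σ _
  exact isWeightedHomogeneous_monomial _ _ _ (weight_pmon_row σ i)

lemma det_col_homog (j : Fin n) :
    IsWeightedHomogeneous (fun v : Fin n × Fin n => if v.2 = j then 1 else 0)
      (Matrix.det (Matrix.of fun i j : Fin n =>
        (MvPolynomial.X (i, j) : MvPolynomial (Fin n × Fin n) F))) 1 := by
  rw [det_eq_sum]
  apply IsWeightedHomogeneous.sum
  intro σ _
  exact isWeightedHomogeneous_monomial _ _ _ (weight_pmon_col σ j)

section Factors

variable {σ' : Type*}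

/-- Helper: if weights `a`, `b` are attained on the supports of `p` and `q` and are
"extremal" in the sense of `hpa`, then the product has a monomial of weight `a + b`. -/
lemma exists_coeff_mul (w : σ' → ℕ) {p q : MvPolynomial σ' F} (a b : ℕ)
    (hp : ∃ u ∈ p.support, Finsupp.weight w u = a)
    (hq : ∃ v ∈ q.support, Finsupp.weight w v = b)
    (hpa : ∀ u ∈ p.support, ∀ v ∈ q.support,
      Finsupp.weight w u + Finsupp.weight w v = a + b → Finsupp.weight w u = a) :
    ∃ d, coeff d (p * q) ≠ 0 ∧ Finsupp.weight w d = a + b := by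
  classical
  set Pa := weightedHomogeneousComponent w a p with hPa
  set Qb := weightedHomogeneousComponent w b q with hQb
  obtain ⟨u0, hu0, hu0w⟩ := hp
  obtain ⟨v0, hv0, hv0w⟩ := hq
  have hPa0 : Pa ≠ 0 := by
    intro h
    have := coeff_weightedHomogeneousComponent (w := w) (n := a) (φ := p) u0
    rw [← hPa, h, if_pos hu0w] at this
    exact (MvPolynomial.mem_support_iff.1 hu0) this.symm
  have hQb0 : Qb ≠ 0 := by
    intro h
    have := coeff_weightedHomogeneousComponent (w := w) (n := b) (φ := q) v0
    rw [← hQb, h, if_pos hv0w] at this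
    exact (MvPolynomial.mem_support_iff.1 hv0) this.symm
  obtain ⟨d, hd⟩ := ne_zero_iff.1 (mul_ne_zero hPa0 hQb0)
  have hdw : Finsupp.weight w d = a + b :=
    ((weightedHomogeneousComponent_isWeightedHomogeneous a p).mul
      (weightedHomogeneousComponent_isWeightedHomogeneous b q)) hd
  refine ⟨d, ?_, hdw⟩
  have key : coeff d (p * q) = coeff d (Pa * Qb) := by
    rw [coeff_mul, coeff_mul]
    refine Finset.sum_congr rfl ?_
    rintro ⟨u, v⟩ huv
    rw [Finset.HasAntidiagonal.mem_antidiagonal] at huv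
    by_cases h1 : Finsupp.weight w u = a ∧ Finsupp.weight w v = b
    · rw [hPa, hQb, coeff_weightedHomogeneousComponent, coeff_weightedHomogeneousComponent,
        if_pos h1.1, if_pos h1.2]
    · have hz : coeff u p = 0 ∨ coeff v q = 0 := by
        by_contra hc
        push_neg at hc
        have hsum : Finsupp.weight w u + Finsupp.weight w v = a + b := by
          rw [← map_add, huv, hdw]
        have hua := hpa u (MvPolynomial.mem_support_iff.2 hc.1) v (MvPolynomial.mem_support_iff.2 hc.2) hsum
        exact h1 ⟨hua, by omega⟩
      rcases hz with h | h <;>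
        simp [hPa, hQb, coeff_weightedHomogeneousComponent, h]
  rw [key]
  exact hd

/-- Factors of a (nonzero) weighted homogeneous polynomial are weighted homogeneous. -/
lemma isWeightedHomogeneous_of_mul (w : σ' → ℕ) {p q : MvPolynomial σ' F} {m : ℕ}
    (hp : p ≠ 0) (hq : q ≠ 0) (h : IsWeightedHomogeneous w (p * q) m) :
    ∃ a b : ℕ, a + b = m ∧ IsWeightedHomogeneous w p a ∧ IsWeightedHomogeneous w q b := by
  classical
  have hps : (p.support.image (Finsupp.weight w)).Nonempty :=
    (support_nonempty.2 hp).image _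
  have hqs : (q.support.image (Finsupp.weight w)).Nonempty :=
    (support_nonempty.2 hq).image _
  set a := (p.support.image (Finsupp.weight w)).max' hps with ha
  set a' := (p.support.image (Finsupp.weight w)).min' hps with ha'
  set b := (q.support.image (Finsupp.weight w)).max' hqs with hb
  set b' := (q.support.image (Finsupp.weight w)).min' hqs with hb'
  have hle_a : ∀ u ∈ p.support, Finsupp.weight w u ≤ a :=
    fun u hu => Finset.le_max' _ _ (Finset.mem_image_of_mem _ hu)
  have hge_a : ∀ u ∈ p.support, a' ≤ Finsupp.weight w u :=
    fun u hu => Finset.min'_le _ _ (Finset.mem_image_of_mem _ hu)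
  have hle_b : ∀ v ∈ q.support, Finsupp.weight w v ≤ b :=
    fun v hv => Finset.le_max' _ _ (Finset.mem_image_of_mem _ hv)
  have hge_b : ∀ v ∈ q.support, b' ≤ Finsupp.weight w v :=
    fun v hv => Finset.min'_le _ _ (Finset.mem_image_of_mem _ hv)
  obtain ⟨ua, hua, huaw⟩ := Finset.mem_image.1 (Finset.max'_mem _ hps)
  obtain ⟨ua', hua', huaw'⟩ := Finset.mem_image.1 (Finset.min'_mem _ hps)
  obtain ⟨vb, hvb, hvbw⟩ := Finset.mem_image.1 (Finset.max'_mem _ hqs)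
  obtain ⟨vb', hvb', hvbw'⟩ := Finset.mem_image.1 (Finset.min'_mem _ hqs)
  obtain ⟨d1, hd1, hd1w⟩ := exists_coeff_mul w a b ⟨ua, hua, huaw⟩ ⟨vb, hvb, hvbw⟩
    (fun u hu v hv hsum => by
      have := hle_a u hu; have := hle_b v hv; omega)
  obtain ⟨d2, hd2, hd2w⟩ := exists_coeff_mul w a' b' ⟨ua', hua', huaw'⟩ ⟨vb', hvb', hvbw'⟩
    (fun u hu v hv hsum => by
      have := hge_a u hu; have := hge_b v hv; omega)
  have hm1 : a + b = m := by rw [← hd1w]; exact h hd1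
  have hm2 : a' + b' = m := by rw [← hd2w]; exact h hd2
  have haa : a = a' := by
    have h1 : a' ≤ a := le_trans (hge_a ua hua) (le_of_eq huaw)
    have h2 : b' ≤ b := le_trans (hge_b vb hvb) (le_of_eq hvbw)
    omega
  have hbb : b = b' := by
    have h1 : a' ≤ a := le_trans (hge_a ua hua) (le_of_eq huaw)
    have h2 : b' ≤ b := le_trans (hge_b vb hvb) (le_of_eq hvbw)
    omega
  refine ⟨a, b, hm1, ?_, ?_⟩
  · intro d hd
    have h1 := hle_a d (MvPolynomial.mem_support_iff.2 hd)
    have h2 := hge_a d (MvPolynomial.mem_support_iff.2 hd)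
    omega
  · intro d hd
    have h1 := hle_b d (MvPolynomial.mem_support_iff.2 hd)
    have h2 := hge_b d (MvPolynomial.mem_support_iff.2 hd)
    omega

end Factors

/-- A polynomial all of whose row-degrees (for every row) are zero is a constant. -/
lemma isUnit_of_all_row_zero {f : MvPolynomial (Fin n × Fin n) F} (hf : f ≠ 0)
    {af : Fin n → ℕ}
    (hfh : ∀ i, IsWeightedHomogeneous (fun v : Fin n × Fin n => if v.1 = i then 1 else 0) f (af i))
    (h0 : ∀ i, af i = 0) : IsUnit f := by
  have hsupp : ∀ d ∈ f.support, d = (0 : (Fin n × Fin n) →₀ ℕ) := by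
    intro d hd
    by_contra hd0
    obtain ⟨v, hv⟩ := Finsupp.support_nonempty_iff.2 hd0
    have h1 : Finsupp.weight (fun x : Fin n × Fin n => if x.1 = v.1 then 1 else 0) d = 0 := by
      rw [hfh v.1 (MvPolynomial.mem_support_iff.1 hd)]; exact h0 v.1
    have h2 := Finsupp.le_weight (fun x : Fin n × Fin n => if x.1 = v.1 then 1 else 0)
      (s := v) (by simp) d
    rw [h1] at h2
    exact (Finsupp.mem_support_iff.1 hv) (Nat.le_zero.1 h2)
  have : f = C (coeff 0 f) := by
    ext d
    by_cases hd : d = 0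
    · subst hd; simp
    · rw [coeff_C, if_neg (Ne.symm hd)]
      by_contra hc
      exact hd (hsupp d (MvPolynomial.mem_support_iff.2 hc))
  rw [this]
  exact (isUnit_iff_ne_zero.2 (fun h => hf (by rw [this, h, map_zero]))).map C

/-- Column version. -/
lemma isUnit_of_all_col_zero {f : MvPolynomial (Fin n × Fin n) F} (hf : f ≠ 0)
    {af : Fin n → ℕ}
    (hfh : ∀ j, IsWeightedHomogeneous (fun v : Fin n × Fin n => if v.2 = j then 1 else 0) f (af j))
    (h0 : ∀ j, af j = 0) : IsUnit f := by
  have hsupp : ∀ d ∈ f.support, d = (0 : (Fin n × Fin n) →₀ ℕ) := by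
    intro d hd
    by_contra hd0
    obtain ⟨v, hv⟩ := Finsupp.support_nonempty_iff.2 hd0
    have h1 : Finsupp.weight (fun x : Fin n × Fin n => if x.2 = v.2 then 1 else 0) d = 0 := by
      rw [hfh v.2 (MvPolynomial.mem_support_iff.1 hd)]; exact h0 v.2
    have h2 := Finsupp.le_weight (fun x : Fin n × Fin n => if x.2 = v.2 then 1 else 0)
      (s := v) (by simp) d
    rw [h1] at h2
    exact (Finsupp.mem_support_iff.1 hv) (Nat.le_zero.1 h2)
  have : f = C (coeff 0 f) := by
    ext d
    by_cases hd : d = 0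
    · subst hd; simp
    · rw [coeff_C, if_neg (Ne.symm hd)]
      by_contra hc
      exact hd (hsupp d (MvPolynomial.mem_support_iff.2 hc))
  rw [this]
  exact (isUnit_iff_ne_zero.2 (fun h => hf (by rw [this, h, map_zero]))).map C

end DetGenericIrred

open DetGenericIrred Finsupp

/-- The determinant of the generic `n × n` matrix over a field `F` is irreducible. -/
theorem det_generic_matrix_irreducible_field (F : Type*) [Field F] (n : ℕ) (hn : 1 ≤ n) :
    Irreducible (Matrix.det (Matrix.of fun i j : Fin n =>
      (MvPolynomial.X (i, j) : MvPolynomial (Fin n × Fin n) F))) := by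
  classical
  set D := Matrix.det (Matrix.of fun i j : Fin n =>
    (MvPolynomial.X (i, j) : MvPolynomial (Fin n × Fin n) F)) with hD
  have i0 : Fin n := ⟨0, hn⟩
  have hD0 : D ≠ 0 := by rw [hD]; exact Matrix.det_mvPolynomialX_ne_zero (Fin n) F
  constructor
  · -- D is not a unit
    intro hu
    obtain ⟨u, hu'⟩ := hu
    have hinv : D * (↑u⁻¹ : MvPolynomial (Fin n × Fin n) F) = 1 := by
      rw [← hu']; exact u.mul_inv
    have hinv0 : (↑u⁻¹ : MvPolynomial (Fin n × Fin n) F) ≠ 0 := by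
      intro h
      rw [h, mul_zero] at hinv
      exact one_ne_zero hinv.symm
    obtain ⟨a, b, hab, hDa, -⟩ := isWeightedHomogeneous_of_mul
      (fun v : Fin n × Fin n => if v.1 = i0 then 1 else 0) hD0 hinv0
      (by rw [hinv]; exact isWeightedHomogeneous_one _ _)
    have h1 := (det_row_homog (F := F) i0).inj_right hD0 hDa
    omega
  · intro f g hfg
    by_contra hor
    push_neg at hor
    obtain ⟨hfu, hgu⟩ := hor
    have hf0 : f ≠ 0 := by rintro rfl; rw [zero_mul] at hfg; exact hD0 hfg
    have hg0 : g ≠ 0 := by rintro rfl; rw [mul_zero] at hfg; exact hD0 hfg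
    -- row weights for f
    choose af bf habf hfh hgh using fun i : Fin n =>
      isWeightedHomogeneous_of_mul (fun v : Fin n × Fin n => if v.1 = i then 1 else 0)
        hf0 hg0 (by rw [← hfg, hD]; exact det_row_homog i)
    -- column weights for g
    choose ag bg habg hfh' hgh' using fun j : Fin n =>
      isWeightedHomogeneous_of_mul (fun v : Fin n × Fin n => if v.2 = j then 1 else 0)
        hf0 hg0 (by rw [← hfg, hD]; exact det_col_homog j)
    have hi : ∃ i, af i = 1 := by
      by_contra hco
      push_neg at hco
      exact hfu (isUnit_of_all_row_zero hf0 hfh (fun i => by have := habf i; have := hco i; omega))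
    have hj : ∃ j, bg j = 1 := by
      by_contra hco
      push_neg at hco
      exact hgu (isUnit_of_all_col_zero hg0 hgh' (fun j => by have := habg j; have := hco j; omega))
    obtain ⟨i, hi⟩ := hi
    obtain ⟨j, hj⟩ := hj
    -- the permutation sending j to i
    set τ : Equiv.Perm (Fin n) := Equiv.swap i j with hτ
    have hτj : τ j = i := Equiv.swap_apply_right i j
    have hcoeff : coeff (pmon n τ) D ≠ 0 := by rw [hD]; exact coeff_det_ne_zero τ
    rw [hfg, MvPolynomial.coeff_mul] at hcoeff
    obtain ⟨⟨u, v⟩, huv, hcuv⟩ := Finset.exists_ne_zero_of_sum_ne_zero hcoeff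
    rw [Finset.HasAntidiagonal.mem_antidiagonal] at huv
    have hcu : coeff u f ≠ 0 := fun h => hcuv (by rw [h, zero_mul])
    have hcv : coeff v g ≠ 0 := fun h => hcuv (by rw [h, mul_zero])
    -- weight computations
    have hwu : Finsupp.weight (fun x : Fin n × Fin n => if x.1 = i then 1 else 0) u = 1 := by
      rw [hfh i hcu]; exact hi
    have hwm : Finsupp.weight (fun x : Fin n × Fin n => if x.1 = i then 1 else 0)
        (pmon n τ) = 1 := weight_pmon_row τ i
    have hwv0 : Finsupp.weight (fun x : Fin n × Fin n => if x.1 = i then 1 else 0) v = 0 := by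
      have : Finsupp.weight (fun x : Fin n × Fin n => if x.1 = i then 1 else 0) u
          + Finsupp.weight (fun x : Fin n × Fin n => if x.1 = i then 1 else 0) v = 1 := by
        rw [← map_add, huv, hwm]
      omega
    have hwvc : Finsupp.weight (fun x : Fin n × Fin n => if x.2 = j then 1 else 0) v = 1 := by
      rw [hgh' j hcv]; exact hj
    -- from hwvc, there is x ∈ v.support with x.2 = j
    have hex : ∃ x ∈ v.support, x.2 = j := by
      by_contra hc
      push_neg at hc
      rw [Finsupp.weight_apply, Finsupp.sum] at hwvc
      rw [Finset.sum_eq_zero (fun x hx => by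
        rw [if_neg (hc x hx)]; simp)] at hwvc
      exact one_ne_zero hwvc.symm
    obtain ⟨x, hxv, hxj⟩ := hex
    -- x is in the support of pmon n τ
    have hxm : pmon n τ x ≠ 0 := by
      intro h
      have hvx := Finsupp.mem_support_iff.1 hxv
      have : u x + v x = 0 := by rw [← Finsupp.add_apply, huv, h]
      omega
    have hx : x = (i, j) := by
      have := pmon_apply_ne_zero hxm
      rw [hxj] at this
      rw [this, hτj]
    -- but then v has positive row-i weight, contradiction
    have hge := Finsupp.le_weight (fun y : Fin n × Fin n => if y.1 = i then 1 else 0)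
      (s := x) (by rw [hx]; simp) v
    rw [hwv0] at hge
    exact (Finsupp.mem_support_iff.1 hxv) (Nat.le_zero.1 hge)
end

section
/- Let U be a unique factorization domain, and let p, q ∈ U[x_1,...,x_m] be polynomials each having content 1. Suppose p and q have no indeterminates in common, i.e., there is no i such that both p and q have positive degree in x_i. Then p and q are coprime (their gcd is a unit). -/
open MvPolynomial

lemma degreeOf_zero_le_of_dvd {R : Type*} [CommRing R] [IsDomain R] {n : ℕ}
    {d p : MvPolynomial (Fin (n + 1)) R} (hd : d ∣ p) (hp : p ≠ 0) :
    d.degreeOf 0 ≤ p.degreeOf 0 := by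
  rw [← natDegree_finSuccEquiv, ← natDegree_finSuccEquiv]
  refine Polynomial.natDegree_le_of_dvd (map_dvd (finSuccEquiv R n) hd) ?_
  simpa using (map_ne_zero_iff _ (finSuccEquiv R n).injective).mpr hp

lemma degreeOf_le_of_dvd {R : Type*} [CommRing R] [IsDomain R] {m : ℕ}
    {d p : MvPolynomial (Fin m) R} (hd : d ∣ p) (hp : p ≠ 0) (i : Fin m) :
    d.degreeOf i ≤ p.degreeOf i := by
  obtain ⟨n, rfl⟩ : ∃ n, m = n + 1 := ⟨m - 1, by have := i.pos; omega⟩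
  have e := Equiv.swap i (0 : Fin (n + 1))
  have hrd : (rename (Equiv.swap i (0 : Fin (n + 1))) d).degreeOf
      (Equiv.swap i (0 : Fin (n + 1)) i) = d.degreeOf i :=
    degreeOf_rename_of_injective (Equiv.injective _) i
  have hrp : (rename (Equiv.swap i (0 : Fin (n + 1))) p).degreeOf
      (Equiv.swap i (0 : Fin (n + 1)) i) = p.degreeOf i :=
    degreeOf_rename_of_injective (Equiv.injective _) i
  rw [Equiv.swap_apply_left] at hrd hrp
  rw [← hrd, ← hrp]
  have hp' : rename (Equiv.swap i (0 : Fin (n + 1))) p ≠ 0 := fun h => hp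
    (rename_injective _ (Equiv.injective _) (by rw [h, map_zero]))
  exact degreeOf_zero_le_of_dvd ((rename _).toRingHom.map_dvd hd) hp'

/-- Two polynomials over a UFD, each of content `1`, sharing no indeterminates,
are coprime (every common divisor is a unit). -/
theorem coprime_of_content_one_disjoint_vars
    {U : Type*} [CommRing U] [IsDomain U] [UniqueFactorizationMonoid U]
    (m : ℕ) (p q : MvPolynomial (Fin m) U)
    (hp : ∀ d : U, (∀ s, d ∣ p.coeff s) → IsUnit d)
    (hq : ∀ d : U, (∀ s, d ∣ q.coeff s) → IsUnit d)
    (hvars : ¬ ∃ i : Fin m, 0 < p.degreeOf i ∧ 0 < q.degreeOf i) :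
    IsRelPrime p q := by
  intro d hdp hdq
  have hp0 : p ≠ 0 := by
    rintro rfl
    exact not_isUnit_zero (hp 0 (fun s => by simp))
  have hq0 : q ≠ 0 := by
    rintro rfl
    exact not_isUnit_zero (hq 0 (fun s => by simp))
  -- all degrees of d are zero
  have hdeg : ∀ i : Fin m, d.degreeOf i = 0 := by
    intro i
    by_contra h
    have h1 : 0 < d.degreeOf i := Nat.pos_of_ne_zero h
    exact hvars ⟨i, lt_of_lt_of_le h1 (degreeOf_le_of_dvd hdp hp0 i),
      lt_of_lt_of_le h1 (degreeOf_le_of_dvd hdq hq0 i)⟩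
  -- hence d is a constant
  have hdC : d = C (d.coeff 0) := by
    ext s
    rcases eq_or_ne s 0 with rfl | hs
    · simp
    · rw [coeff_C, if_neg (Ne.symm hs)]
      by_contra hc
      obtain ⟨i, hi⟩ := Finsupp.ne_iff.mp hs
      rw [Finsupp.coe_zero, Pi.zero_apply] at hi
      have : s i ≤ d.degreeOf i := by
        rw [degreeOf_eq_sup]
        exact Finset.le_sup (f := fun t => t i) (mem_support_iff.mpr hc)
      rw [hdeg i] at this
      omega
  rw [hdC] at hdp ⊢
  exact (hp _ (fun s => (C_dvd_iff_dvd_coeff _ _).mp hdp s)).map C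
end
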